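/- For every ε > 0, the double sum over z ∈ ℤ² and m ∈ ℤ², restricted by the constraint |p-z|² + |z-m|² - |m|² + τ = 0 (for fixed p ∈ ℤ², τ ∈ ℝ), of 1/(⟨p-z⟩^{2+ε} ⟨m⟩^{2-ε}) is bounded by a constant depending only on ε, uniformly in p and τ. Here ⟨n⟩ = (1+|n|²)^{1/2}. -/

import Mathlib

/-- squared Euclidean norm on ℤ² -/
def zsq (m : ℤ × ℤ) : ℤ := m.1^2 + m.2^2

/-- Japanese bracket `⟨n⟩ = (1+|n|²)^{1/2}` on ℤ² -/
noncomputable def jap (n : ℤ × ℤ) : ℝ := Real.sqrt (1 + (zsq n : ℝ))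

namespace StmtAux

def dotz (z m : ℤ × ℤ) : ℤ := z.1 * m.1 + z.2 * m.2

noncomputable def jap1 (k : ℤ) : ℝ := Real.sqrt (1 + (k : ℝ)^2)

lemma zsq_nonneg (m : ℤ × ℤ) : 0 ≤ zsq m := by unfold zsq; positivity

lemma one_le_jap (m : ℤ × ℤ) : 1 ≤ jap m := by
  have h : (0:ℝ) ≤ (zsq m : ℝ) := by exact_mod_cast zsq_nonneg m
  have : (1:ℝ) = Real.sqrt 1 := (Real.sqrt_one).symm
  rw [this]
  exact Real.sqrt_le_sqrt (by linarith)

lemma jap_pos (m : ℤ × ℤ) : 0 < jap m := lt_of_lt_of_le one_pos (one_le_jap m)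

lemma jap_sq (m : ℤ × ℤ) : jap m ^ 2 = 1 + (zsq m : ℝ) := by
  have h : (0:ℝ) ≤ (zsq m : ℝ) := by exact_mod_cast zsq_nonneg m
  exact Real.sq_sqrt (by linarith)

lemma one_le_jap1 (k : ℤ) : 1 ≤ jap1 k := by
  have : (1:ℝ) = Real.sqrt 1 := (Real.sqrt_one).symm
  rw [this]
  exact Real.sqrt_le_sqrt (le_add_of_nonneg_right (by positivity))

lemma jap1_pos (k : ℤ) : 0 < jap1 k := lt_of_lt_of_le one_pos (one_le_jap1 k)

lemma jap1_sq (k : ℤ) : jap1 k ^ 2 = 1 + (k:ℝ)^2 := Real.sq_sqrt (by positivity)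

/-- rpow of jap1 is positive -/
lemma jap1_rpow_pos (k : ℤ) (r : ℝ) : 0 < jap1 k ^ r := Real.rpow_pos_of_pos (jap1_pos k) r

lemma jap_rpow_pos (m : ℤ × ℤ) (r : ℝ) : 0 < jap m ^ r := Real.rpow_pos_of_pos (jap_pos m) r

/-- summability of 1/jap1^r over ℤ for r > 1 -/
lemma summable_jap1 (r : ℝ) (hr : 1 < r) : Summable (fun k : ℤ => 1 / jap1 k ^ r) := by
  have h0 : Summable (fun k : ℤ => 1 / |(k:ℝ) + 0| ^ r) :=
    (Real.summable_one_div_int_add_rpow 0 r).mpr hr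
  have h1 : Summable (fun k : ℤ => 1 / |(k:ℝ)| ^ r) := by simpa using h0
  have h2 : Summable (fun k : ℤ => 1 / |(k:ℝ)| ^ r + (if k = (0:ℤ) then 1 else 0)) :=
    h1.add (summable_of_ne_finset_zero (s := {(0:ℤ)}) (by intro b hb; simp at hb; simp [hb]))
  refine Summable.of_nonneg_of_le
    (fun k => div_nonneg zero_le_one (jap1_rpow_pos k r).le) (fun k => ?_) h2
  rcases eq_or_ne k 0 with rfl | hk
  · have h5 : 1 / jap1 (0:ℤ) ^ r ≤ 1 := by
      rw [div_le_one (jap1_rpow_pos 0 r)]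
      exact Real.one_le_rpow (one_le_jap1 0) (by linarith)
    have h3 : (0:ℝ) ≤ 1 / |((0:ℤ):ℝ)| ^ r := by positivity
    simp only [if_pos rfl]
    norm_num
    rw [Real.zero_rpow (ne_of_gt (by linarith : (0:ℝ) < r))]
    rw [one_div] at h5
    simp
    linarith
  · have hk' : (0:ℝ) < |(k:ℝ)| := by
      simp only [abs_pos, ne_eq, Int.cast_eq_zero]; exact hk
    have hle : |(k:ℝ)| ≤ jap1 k := by
      rw [← Real.sqrt_sq_eq_abs]
      exact Real.sqrt_le_sqrt (by nlinarith)
    have : |(k:ℝ)| ^ r ≤ jap1 k ^ r := Real.rpow_le_rpow (abs_nonneg _) hle (by linarith)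
    have h4 : (0:ℝ) < |(k:ℝ)| ^ r := Real.rpow_pos_of_pos hk' r
    have := one_div_le_one_div_of_le h4 this
    simp only [if_neg hk, add_zero]
    linarith

lemma not_summable_inv_jap1 : ¬ Summable (fun k : ℤ => 1 / jap1 k) := by
  intro h
  have h1 : Summable (fun k : ℤ => 1 / (2 * |(k:ℝ)|)) := by
    refine Summable.of_nonneg_of_le (fun k => by positivity) (fun k => ?_) h
    rcases eq_or_ne k 0 with rfl | hk
    · simp
      exact (jap1_pos 0).le
    · have hk' : (1:ℝ) ≤ |(k:ℝ)| := by
        have h6 : (1:ℤ) ≤ |k| := Int.one_le_abs (by exact_mod_cast hk)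
        calc (1:ℝ) ≤ |(k:ℤ)| := by exact_mod_cast h6
        _ = |(k:ℝ)| := by push_cast; rfl
      have hle : jap1 k ≤ 2 * |(k:ℝ)| := by
        have h7 : (1:ℝ) + (k:ℝ)^2 ≤ (2 * |(k:ℝ)|)^2 := by
          have : (k:ℝ)^2 = |(k:ℝ)|^2 := (sq_abs _).symm
          nlinarith
        calc jap1 k ≤ Real.sqrt ((2 * |(k:ℝ)|)^2) := Real.sqrt_le_sqrt h7
        _ = 2 * |(k:ℝ)| := Real.sqrt_sq (by positivity)
      exact one_div_le_one_div_of_le (jap1_pos k) hle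
  have h2 : Summable (fun k : ℤ => 1 / |(k:ℝ)|) := by
    have := h1.mul_left 2
    refine this.congr (fun k => ?_)
    rcases eq_or_ne k 0 with rfl | hk
    · simp
    · have : |(k:ℝ)| ≠ 0 := by
        simp only [ne_eq, abs_eq_zero, Int.cast_eq_zero]; exact hk
      field_simp
  have h3 : (1:ℝ) < 1 := by
    rw [← Real.summable_one_div_int_add_rpow 0 1]
    refine h2.congr (fun k => ?_)
    simp [Real.rpow_one]
  exact absurd h3 (lt_irrefl 1)


lemma jap_eq (m : ℤ × ℤ) : jap m = Real.sqrt (1 + (m.1:ℝ)^2 + (m.2:ℝ)^2) := by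
  unfold jap zsq; push_cast; ring_nf

/-- non-summability of 1/jap^2 over ℤ² -/
lemma not_summable_jap_two : ¬ Summable (fun m : ℤ × ℤ => 1 / jap m ^ (2:ℝ)) := by
  intro h
  have hf : ∀ m : ℤ × ℤ, 1 / jap m ^ (2:ℝ) = 1 / (1 + (m.1:ℝ)^2 + (m.2:ℝ)^2) := by
    intro m
    rw [show (2:ℝ) = ((2:ℕ):ℝ) by norm_num, Real.rpow_natCast, jap_sq]
    unfold zsq; push_cast; ring_nf
  have h' : Summable (fun m : ℤ × ℤ => 1 / (1 + (m.1:ℝ)^2 + (m.2:ℝ)^2)) := h.congr hf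
  have hnn : (0:(ℤ×ℤ)→ℝ) ≤ (fun m : ℤ × ℤ => 1 / (1 + (m.1:ℝ)^2 + (m.2:ℝ)^2)) := by
    intro m; dsimp; positivity
  obtain ⟨hrow, hcol⟩ := (summable_prod_of_nonneg hnn).mp h'
  have key : ∀ a : ℤ, 1 / (2 * (|(a:ℝ)| + 1)) ≤ ∑' b : ℤ, 1 / (1 + (a:ℝ)^2 + (b:ℝ)^2) := by
    intro a
    have habs : |(a:ℝ)| = ((|a| : ℤ) : ℝ) := by push_cast; rfl
    have hsum : ∑ b ∈ Finset.Icc (0:ℤ) |a|, (1 / (2 * (1 + (a:ℝ)^2)))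
        ≤ ∑ b ∈ Finset.Icc (0:ℤ) |a|, 1 / (1 + (a:ℝ)^2 + (b:ℝ)^2) := by
      refine Finset.sum_le_sum (fun b hb => ?_)
      simp only [Finset.mem_Icc] at hb
      have h1 : b ^ 2 ≤ a ^ 2 := by
        have := sq_abs a
        nlinarith [hb.1, hb.2, abs_nonneg a]
      have hb2 : (b:ℝ)^2 ≤ (a:ℝ)^2 := by exact_mod_cast h1
      have hp : (0:ℝ) < 1 + (a:ℝ)^2 + (b:ℝ)^2 := by positivity
      apply one_div_le_one_div_of_le hp
      nlinarith
    have hts : ∑ b ∈ Finset.Icc (0:ℤ) |a|, 1 / (1 + (a:ℝ)^2 + (b:ℝ)^2)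
        ≤ ∑' b : ℤ, 1 / (1 + (a:ℝ)^2 + (b:ℝ)^2) :=
      Summable.sum_le_tsum _ (fun b _ => by positivity) (hrow a)
    have hc : ∑ b ∈ Finset.Icc (0:ℤ) |a|, (1 / (2 * (1 + (a:ℝ)^2)))
        = (|(a:ℝ)| + 1) * (1 / (2 * (1 + (a:ℝ)^2))) := by
      rw [Finset.sum_const, Int.card_Icc, nsmul_eq_mul]
      congr 1
      have h0 : (0:ℤ) ≤ |a| + 1 := by have := abs_nonneg a; omega
      have hc2 : (((|a| + 1 - 0).toNat : ℕ) : ℝ) = ((|a| + 1 : ℤ) : ℝ) := by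
        rw [sub_zero]; exact_mod_cast Int.toNat_of_nonneg h0
      rw [hc2, habs]
      push_cast
      ring
    have hfin : 1 / (2 * (|(a:ℝ)| + 1)) ≤ (|(a:ℝ)| + 1) * (1 / (2 * (1 + (a:ℝ)^2))) := by
      have ha1 : (0:ℝ) < |(a:ℝ)| + 1 := by positivity
      have ha2 : (0:ℝ) < 2 * (1 + (a:ℝ)^2) := by positivity
      rw [div_le_iff₀ (by positivity), mul_one_div, div_mul_eq_mul_div, le_div_iff₀ ha2]
      nlinarith [sq_abs ((a:ℝ)), abs_nonneg ((a:ℝ))]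
    linarith
  have h2 : Summable (fun a : ℤ => 1 / (2 * (|(a:ℝ)| + 1))) :=
    Summable.of_nonneg_of_le (fun a => by positivity) key hcol
  have h3 : Summable (fun a : ℤ => 1 / |(a:ℝ)|) := by
    have h4 := h2.mul_left 4
    refine Summable.of_nonneg_of_le (fun a => by positivity) (fun a => ?_) h4
    rcases eq_or_ne a 0 with rfl | ha
    · simp
    · have h1 : (1:ℝ) ≤ |(a:ℝ)| := by
        have h6 : (1:ℤ) ≤ |a| := Int.one_le_abs (by exact_mod_cast ha)
        calc (1:ℝ) ≤ ((|a| : ℤ) : ℝ) := by exact_mod_cast h6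
        _ = |(a:ℝ)| := by push_cast; rfl
      have hx : (0:ℝ) < |(a:ℝ)| := by linarith
      have h7 : 4 * (1 / (2 * (|(a:ℝ)| + 1))) = 2 / (|(a:ℝ)| + 1) := by
        rw [mul_one_div, div_eq_div_iff (by linarith) (by linarith)]
        ring
      rw [h7, div_le_div_iff₀ hx (by linarith)]
      linarith
  have h4 : (1:ℝ) < 1 := by
    rw [← Real.summable_one_div_int_add_rpow 0 1]
    refine h3.congr (fun k => ?_)
    simp [Real.rpow_one]
  exact absurd h4 (lt_irrefl 1)


lemma jap_rpow_two (m : ℤ × ℤ) : jap m ^ (2:ℝ) = 1 + (zsq m : ℝ) := by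
  rw [show (2:ℝ) = ((2:ℕ):ℝ) by norm_num, Real.rpow_natCast, jap_sq]

lemma summable_jap (s : ℝ) (hs : 2 < s) : Summable (fun m : ℤ × ℤ => 1 / jap m ^ s) := by
  have hs2 : 1 < s / 2 := by linarith
  have hsum : Summable (fun m : ℤ × ℤ => (1 / jap1 m.1 ^ (s/2)) * (1 / jap1 m.2 ^ (s/2))) := by
    have := Summable.mul_of_nonneg (f := fun k : ℤ => 1 / jap1 k ^ (s/2))
      (g := fun k : ℤ => 1 / jap1 k ^ (s/2)) (summable_jap1 _ hs2) (summable_jap1 _ hs2)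
      (fun k => div_nonneg zero_le_one (jap1_rpow_pos k (s/2)).le)
      (fun k => div_nonneg zero_le_one (jap1_rpow_pos k (s/2)).le)
    exact this
  refine Summable.of_nonneg_of_le (fun m => div_nonneg zero_le_one (jap_rpow_pos m s).le) (fun m => ?_) hsum
  have hkey : jap1 m.1 * jap1 m.2 ≤ jap m ^ (2:ℝ) := by
    rw [jap_rpow_two]
    have e1 : jap1 m.1 * jap1 m.2 = Real.sqrt ((1 + (m.1:ℝ)^2) * (1 + (m.2:ℝ)^2)) := by
      rw [Real.sqrt_mul (by positivity)]; rfl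
    rw [e1]
    have hz : (0:ℝ) ≤ (zsq m : ℝ) := by exact_mod_cast zsq_nonneg m
    have e2 : (1 + (zsq m : ℝ)) = Real.sqrt ((1 + (zsq m : ℝ))^2) := by
      rw [Real.sqrt_sq (by linarith)]
    rw [e2]
    apply Real.sqrt_le_sqrt
    have : (zsq m : ℝ) = (m.1:ℝ)^2 + (m.2:ℝ)^2 := by unfold zsq; push_cast; ring
    rw [this]
    nlinarith [sq_nonneg ((m.1:ℝ)), sq_nonneg ((m.2:ℝ)), sq_nonneg ((m.1:ℝ)*(m.2:ℝ))]
  have hmono : (jap1 m.1 * jap1 m.2) ^ (s/2) ≤ (jap m ^ (2:ℝ)) ^ (s/2) :=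
    Real.rpow_le_rpow (mul_pos (jap1_pos m.1) (jap1_pos m.2)).le hkey (by linarith)
  have e3 : (jap m ^ (2:ℝ)) ^ (s/2) = jap m ^ s := by
    rw [← Real.rpow_mul (jap_pos m).le]
    congr 1
    ring
  have e4 : (jap1 m.1 * jap1 m.2) ^ (s/2) = jap1 m.1 ^ (s/2) * jap1 m.2 ^ (s/2) :=
    Real.mul_rpow (jap1_pos m.1).le (jap1_pos m.2).le
  have hpos : (0:ℝ) < jap1 m.1 ^ (s/2) * jap1 m.2 ^ (s/2) := by
    have := jap1_rpow_pos m.1 (s/2); have := jap1_rpow_pos m.2 (s/2); positivity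
  calc 1 / jap m ^ s ≤ 1 / (jap1 m.1 ^ (s/2) * jap1 m.2 ^ (s/2)) := by
        apply one_div_le_one_div_of_le hpos
        rw [← e4, ← e3]; exact hmono
  _ = (1 / jap1 m.1 ^ (s/2)) * (1 / jap1 m.2 ^ (s/2)) := by rw [one_div_mul_one_div]


lemma sq_one_le {a : ℤ} (ha : a ≠ 0) : 1 ≤ a^2 := by
  rcases lt_or_gt_of_ne ha with h | h <;> nlinarith

lemma zsq_one_le {w : ℤ × ℤ} (hw : w ≠ 0) : 1 ≤ zsq w := by
  have : w.1 ≠ 0 ∨ w.2 ≠ 0 := by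
    by_contra hc
    push_neg at hc
    exact hw (Prod.ext hc.1 hc.2)
  unfold zsq
  rcases this with h | h
  · nlinarith [sq_one_le h, sq_nonneg w.2]
  · nlinarith [sq_one_le h, sq_nonneg w.1]

lemma perp_struct (z : ℤ × ℤ) (hz : z ≠ 0) :
    ∃ w : ℤ × ℤ, w ≠ 0 ∧ dotz z w = 0 ∧
      ∀ u : ℤ × ℤ, dotz z u = 0 → ∃ k : ℤ, u = (k * w.1, k * w.2) := by
  set g : ℤ := (Int.gcd z.1 z.2 : ℤ) with hg
  have hgpos : 0 < Int.gcd z.1 z.2 := by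
    rcases (by by_contra hc; push_neg at hc; exact hz (Prod.ext hc.1 hc.2) :
      z.1 ≠ 0 ∨ z.2 ≠ 0) with h | h
    · exact Int.gcd_pos_of_ne_zero_left z.2 h
    · exact Int.gcd_pos_of_ne_zero_right z.1 h
  have hg0 : g ≠ 0 := by rw [hg]; exact_mod_cast hgpos.ne'
  set a' : ℤ := z.1 / g with ha'
  set b' : ℤ := z.2 / g with hb'
  have hza : g * a' = z.1 := Int.mul_ediv_cancel' (Int.gcd_dvd_left z.1 z.2)
  have hzb : g * b' = z.2 := Int.mul_ediv_cancel' (Int.gcd_dvd_right z.1 z.2)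
  have hcop' : Int.gcd a' b' = 1 := Int.gcd_div_gcd_div_gcd hgpos
  have hcop : IsCoprime a' b' := Int.isCoprime_iff_gcd_eq_one.mpr hcop'
  have hab : a' ≠ 0 ∨ b' ≠ 0 := by
    by_contra hc
    push_neg at hc
    rw [hc.1, hc.2] at hcop'
    simp [Int.gcd] at hcop'
  refine ⟨(-b', a'), ?_, ?_, ?_⟩
  · intro hcon
    rw [Prod.ext_iff] at hcon
    simp at hcon
    rcases hab with h | h
    · exact h hcon.2
    · exact h hcon.1
  · show z.1 * (-b') + z.2 * a' = 0
    rw [← hza, ← hzb]; ring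
  · intro u hu
    have h1 : a' * u.1 + b' * u.2 = 0 := by
      have h2 : g * (a' * u.1 + b' * u.2) = 0 := by
        have : z.1 * u.1 + z.2 * u.2 = 0 := hu
        rw [← hza, ← hzb] at this
        linarith [this]
      exact (mul_eq_zero.mp h2).resolve_left hg0
    rcases eq_or_ne a' 0 with h0 | h0
    · have hb1 : b' * b' = 1 := by
        rw [h0] at hcop'
        have : b'.natAbs = 1 := by simpa [Int.gcd] using hcop'
        have : b' = 1 ∨ b' = -1 := by omega
        rcases this with h | h <;> simp [h]
      have hbne : b' ≠ 0 := by intro hc; rw [hc] at hb1; simp at hb1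
      have hu2 : u.2 = 0 := by
        rw [h0] at h1
        simp at h1
        exact h1.resolve_left hbne
      refine ⟨-u.1 * b', ?_⟩
      rw [Prod.ext_iff]
      constructor
      · show u.1 = -u.1 * b' * (-b')
        have he : -u.1 * b' * (-b') = u.1 * (b' * b') := by ring
        rw [he, hb1, mul_one]
      · show u.2 = -u.1 * b' * a'
        rw [hu2, h0]; ring
    · have hdvd : a' ∣ u.2 := by
        refine hcop.dvd_of_dvd_mul_left ⟨-u.1, ?_⟩
        linarith [h1]
      obtain ⟨k, hk⟩ := hdvd
      refine ⟨k, ?_⟩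
      have h3 : a' * (u.1 + b' * k) = 0 := by
        rw [hk] at h1
        ring_nf
        ring_nf at h1
        linarith [h1]
      have h4 : u.1 + b' * k = 0 := (mul_eq_zero.mp h3).resolve_left h0
      rw [Prod.ext_iff]
      constructor
      · show u.1 = k * -b'
        linarith
      · show u.2 = k * a'
        rw [hk]; ring

lemma exists_min (S : Set (ℤ × ℤ)) (hS : S.Nonempty) :
    ∃ m ∈ S, ∀ m' ∈ S, zsq m ≤ zsq m' := by
  obtain ⟨m0, hm0⟩ := hS
  have hT : {n : ℕ | ∃ m ∈ S, (zsq m).toNat = n}.Nonempty := ⟨(zsq m0).toNat, m0, hm0, rfl⟩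
  obtain ⟨m, hm, hmn⟩ := Nat.sInf_mem hT
  refine ⟨m, hm, fun m' hm' => ?_⟩
  have h1 : sInf {n : ℕ | ∃ m ∈ S, (zsq m).toNat = n} ≤ (zsq m').toNat :=
    Nat.sInf_le ⟨m', hm', rfl⟩
  rw [← hmn] at h1
  have := zsq_nonneg m
  have := zsq_nonneg m'
  omega


lemma quad_lower (A B W k : ℤ) (hA : 0 ≤ A) (hW : 1 ≤ W)
    (h1 : 2*B ≤ W) (h2 : -(2*B) ≤ W) : k^2 - 1 ≤ 2*(A + 2*k*B + k^2*W) := by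
  rcases le_or_gt 0 k with hk | hk
  · have hk2 : 0 ≤ k^2 - k := by nlinarith
    nlinarith [mul_nonneg hk (by linarith : (0:ℤ) ≤ 2*B + W),
      mul_nonneg hk2 (by linarith : (0:ℤ) ≤ W - 1), sq_nonneg (k-1)]
  · have hk1 : k ≤ -1 := by omega
    have hk2 : 0 ≤ k^2 + k := by nlinarith
    nlinarith [mul_nonneg (by linarith : (0:ℤ) ≤ -k) (by linarith : (0:ℤ) ≤ W - 2*B),
      mul_nonneg hk2 (by linarith : (0:ℤ) ≤ W - 1), sq_nonneg (k+1)]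

lemma quad_upper (A B W k : ℤ) (hA : 0 ≤ A) (hW : 1 ≤ W) (hCS : B^2 ≤ A*W) :
    1 + (A + 2*k*B + k^2*W) ≤ 2*(1+A)*W*(1+k^2) := by
  have hS : 0 ≤ A + k^2*W := by nlinarith [sq_nonneg k]
  have hsq : (2*k*B)^2 ≤ (A + k^2*W)^2 := by nlinarith [sq_nonneg (A - k^2*W), sq_nonneg k, sq_nonneg (k*B)]
  have h2kB : 2*k*B ≤ A + k^2*W := by nlinarith [hsq, hS]
  nlinarith [sq_nonneg k, mul_nonneg hA (sq_nonneg k)]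

lemma L1 (r : ℝ) (hr2 : r < 2) :
    ∃ K : ℝ, 0 ≤ K ∧ ∀ (z : ℤ × ℤ) (c : ℝ),
      (∑' m : ℤ × ℤ, if ((2 * dotz z m : ℤ) : ℝ) = c then 1 / jap m ^ r else 0) ≤ K := by
  have hSnn : (0:ℝ) ≤ ∑' k : ℤ, 1 / jap1 k ^ r :=
    tsum_nonneg (fun k => div_nonneg zero_le_one (jap1_rpow_pos k r).le)
  refine ⟨2 * ∑' k : ℤ, 1 / jap1 k ^ r, by linarith, fun z c => ?_⟩
  set K := 2 * ∑' k : ℤ, 1 / jap1 k ^ r with hK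
  set gf : (ℤ × ℤ) → ℝ := fun m => if ((2 * dotz z m : ℤ) : ℝ) = c then 1 / jap m ^ r else 0
    with hgf
  have hgnn : ∀ m, 0 ≤ gf m := by
    intro m
    rw [hgf]
    dsimp only
    split_ifs
    · exact div_nonneg zero_le_one (jap_rpow_pos m r).le
    · exact le_refl 0
  by_cases hsum : Summable gf
  swap
  · rw [tsum_eq_zero_of_not_summable hsum]; linarith
  by_cases hne : ∃ m0 : ℤ × ℤ, ((2 * dotz z m0 : ℤ) : ℝ) = c
  swap
  · have : ∀ m, gf m = 0 := by
      intro m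
      rw [hgf]
      exact if_neg (fun h => hne ⟨m, h⟩)
    rw [tsum_congr this, tsum_zero]; linarith
  obtain ⟨mst, hmst, hmin⟩ := exists_min {m : ℤ × ℤ | ((2 * dotz z m : ℤ) : ℝ) = c} hne
  by_cases hz : z = 0
  · -- constraint independent of m ⇒ gf is everywhere 1/jap^r ⇒ not summable, contradiction
    exfalso
    have hc0 : ∀ m : ℤ × ℤ, ((2 * dotz z m : ℤ) : ℝ) = c := by
      intro m
      have h1 : dotz z m = 0 := by rw [hz]; unfold dotz; simp
      have h2 : dotz z mst = 0 := by rw [hz]; unfold dotz; simp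
      rw [h1]
      rw [Set.mem_setOf_eq, h2] at hmst
      exact hmst
    have hge : ∀ m : ℤ × ℤ, 1 / jap m ^ (2:ℝ) ≤ gf m := by
      intro m
      rw [hgf]
      dsimp only
      rw [if_pos (hc0 m)]
      apply one_div_le_one_div_of_le (jap_rpow_pos m r)
      exact Real.rpow_le_rpow_of_exponent_le (one_le_jap m) hr2.le
    exact not_summable_jap_two (Summable.of_nonneg_of_le
      (fun m => div_nonneg zero_le_one (jap_rpow_pos m (2:ℝ)).le) hge hsum)
  -- z ≠ 0 : line structure
  obtain ⟨w, hw0, hwz, hwall⟩ := perp_struct z hz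
  set param : ℤ → ℤ × ℤ := fun k => (mst.1 + k * w.1, mst.2 + k * w.2) with hparam
  have hw12 : w.1 ≠ 0 ∨ w.2 ≠ 0 := by
    by_contra hcc
    push_neg at hcc
    exact hw0 (Prod.ext hcc.1 hcc.2)
  have hinj : Function.Injective param := by
    intro k k' hkk
    rw [hparam, Prod.ext_iff] at hkk
    simp only at hkk
    rcases hw12 with h | h
    · exact mul_right_cancel₀ h (by linarith [hkk.1])
    · exact mul_right_cancel₀ h (by linarith [hkk.2])
  have hmem : ∀ k : ℤ, ((2 * dotz z (param k) : ℤ) : ℝ) = c := by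
    intro k
    have : dotz z (param k) = dotz z mst := by
      unfold dotz at hwz ⊢
      rw [hparam]
      simp only
      linear_combination k * hwz
    rw [this]
    exact hmst
  have hsupp : Function.support gf ⊆ Set.range param := by
    intro m hm
    rw [Function.mem_support, hgf] at hm
    dsimp only at hm
    by_cases hcm : ((2 * dotz z m : ℤ) : ℝ) = c
    swap
    · exact absurd (if_neg hcm) hm
    have hint : 2 * dotz z m = 2 * dotz z mst := by
      have := hmst
      rw [Set.mem_setOf_eq] at this
      exact_mod_cast hcm.trans this.symm
    have hdz : dotz z (m - mst) = 0 := by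
      unfold dotz at hint ⊢
      rw [Prod.fst_sub, Prod.snd_sub]
      nlinarith [hint]
    obtain ⟨k, hk⟩ := hwall _ hdz
    rw [Prod.ext_iff, Prod.fst_sub, Prod.snd_sub] at hk
    simp only at hk
    refine ⟨k, ?_⟩
    rw [hparam, Prod.ext_iff]
    exact ⟨by simp only; linarith [hk.1], by simp only; linarith [hk.2]⟩
  have htsum_eq : ∑' m, gf m = ∑' k : ℤ, gf (param k) := (hinj.tsum_eq hsupp).symm
  have hgpk : ∀ k : ℤ, gf (param k) = 1 / jap (param k) ^ r := by
    intro k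
    rw [hgf]
    dsimp only
    rw [if_pos (hmem k)]
  -- quadratic data
  set A := zsq mst with hA
  set B := dotz mst w with hB
  set W := zsq w with hW
  have hAnn : 0 ≤ A := zsq_nonneg mst
  have hW1 : 1 ≤ W := zsq_one_le hw0
  have hzsq_param : ∀ k : ℤ, zsq (param k) = A + 2*k*B + k^2*W := by
    intro k
    rw [hparam, hA, hB, hW]
    unfold zsq dotz
    simp only
    ring
  have hmin' : ∀ k : ℤ, A ≤ zsq (param k) := by
    intro k
    exact hmin (param k) (hmem k)
  have h2B1 : 2*B ≤ W := by
    have := hmin' (-1)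
    rw [hzsq_param] at this
    nlinarith [this]
  have h2B2 : -(2*B) ≤ W := by
    have := hmin' 1
    rw [hzsq_param] at this
    nlinarith [this]
  have hCS : B^2 ≤ A*W := by
    rw [hA, hB, hW]
    unfold zsq dotz
    nlinarith [sq_nonneg (mst.1 * w.2 - mst.2 * w.1)]
  -- real bounds
  have hlow : ∀ k : ℤ, jap1 k ≤ Real.sqrt 2 * jap (param k) := by
    intro k
    have hint : k^2 - 1 ≤ 2*(A + 2*k*B + k^2*W) := quad_lower A B W k hAnn hW1 h2B1 h2B2
    rw [← hzsq_param k] at hint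
    have hreal : (1:ℝ) + (k:ℝ)^2 ≤ 2 * (1 + (zsq (param k) : ℝ)) := by
      have : ((k^2 - 1 : ℤ) : ℝ) ≤ ((2*(zsq (param k)) : ℤ) : ℝ) := by exact_mod_cast hint
      push_cast at this
      linarith
    calc jap1 k = Real.sqrt (1 + (k:ℝ)^2) := rfl
    _ ≤ Real.sqrt (2 * (1 + (zsq (param k) : ℝ))) := Real.sqrt_le_sqrt hreal
    _ = Real.sqrt 2 * jap (param k) := by
        rw [Real.sqrt_mul (by norm_num : (0:ℝ) ≤ 2)]
        rfl
  have hzparamnn : ∀ k : ℤ, (0:ℝ) ≤ 1 + (zsq (param k) : ℝ) := by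
    intro k
    have : (0:ℝ) ≤ (zsq (param k) : ℝ) := by exact_mod_cast zsq_nonneg (param k)
    linarith
  set M : ℝ := Real.sqrt 2 * jap mst * Real.sqrt (W : ℝ) with hM
  have hWr1 : (1:ℝ) ≤ (W:ℝ) := by exact_mod_cast hW1
  have hM1 : 1 ≤ M := by
    rw [hM]
    have h1 : (1:ℝ) ≤ Real.sqrt 2 := by
      rw [show (1:ℝ) = Real.sqrt 1 from (Real.sqrt_one).symm]
      exact Real.sqrt_le_sqrt (by norm_num)
    have h2 : (1:ℝ) ≤ Real.sqrt (W:ℝ) := by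
      rw [show (1:ℝ) = Real.sqrt 1 from (Real.sqrt_one).symm]
      exact Real.sqrt_le_sqrt hWr1
    have h3 : (1:ℝ)*1 ≤ Real.sqrt 2 * jap mst :=
      mul_le_mul h1 (one_le_jap mst) zero_le_one (by linarith)
    have h4 : (1:ℝ)*1 ≤ (Real.sqrt 2 * jap mst) * Real.sqrt (W:ℝ) :=
      mul_le_mul (by linarith) h2 zero_le_one (by linarith)
    linarith
  have hup : ∀ k : ℤ, jap (param k) ≤ M * jap1 k := by
    intro k
    have hint : 1 + (A + 2*k*B + k^2*W) ≤ 2*(1+A)*W*(1+k^2) := quad_upper A B W k hAnn hW1 hCS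
    rw [← hzsq_param k] at hint
    have hreal : 1 + (zsq (param k) : ℝ) ≤ 2 * (1 + (A:ℝ)) * (W:ℝ) * (1 + (k:ℝ)^2) := by
      have h5 : ((1 + zsq (param k) : ℤ) : ℝ) ≤ ((2*(1+A)*W*(1+k^2) : ℤ) : ℝ) := by
        exact_mod_cast hint
      push_cast at h5
      linarith
    have hArnn : (0:ℝ) ≤ 1 + (A:ℝ) := by
      have : (0:ℝ) ≤ (A:ℝ) := by exact_mod_cast hAnn
      linarith
    calc jap (param k) = Real.sqrt (1 + (zsq (param k) : ℝ)) := rfl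
    _ ≤ Real.sqrt (2 * (1 + (A:ℝ)) * (W:ℝ) * (1 + (k:ℝ)^2)) := Real.sqrt_le_sqrt hreal
    _ = M * jap1 k := by
        rw [hM]
        rw [show 2 * (1 + (A:ℝ)) * (W:ℝ) * (1 + (k:ℝ)^2)
            = 2 * ((1 + (A:ℝ)) * ((W:ℝ) * (1 + (k:ℝ)^2))) by ring]
        rw [Real.sqrt_mul (by norm_num : (0:ℝ) ≤ 2),
            Real.sqrt_mul hArnn, Real.sqrt_mul (by linarith : (0:ℝ) ≤ (W:ℝ))]
        unfold jap jap1
        rw [hA]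
        ring
  rcases le_or_gt r 1 with hr1 | hr1
  · -- divergent regime: contradiction with summability
    exfalso
    have hfle : ∀ k : ℤ, 1 / (M * jap1 k) ≤ gf (param k) := by
      intro k
      rw [hgpk k]
      apply one_div_le_one_div_of_le (jap_rpow_pos (param k) r)
      calc jap (param k) ^ r ≤ jap (param k) ^ (1:ℝ) :=
        Real.rpow_le_rpow_of_exponent_le (one_le_jap _) hr1
      _ = jap (param k) := Real.rpow_one _
      _ ≤ M * jap1 k := hup k
    have hsum2 : Summable (fun k : ℤ => gf (param k)) := hsum.comp_injective hinj
    have hsum3 : Summable (fun k : ℤ => 1 / (M * jap1 k)) :=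
      Summable.of_nonneg_of_le
        (fun k => div_nonneg zero_le_one (by nlinarith [jap1_pos k])) hfle hsum2
    have hsum4 : Summable (fun k : ℤ => (1/M) * (1 / jap1 k)) := by
      refine hsum3.congr (fun k => ?_)
      exact (one_div_mul_one_div M (jap1 k)).symm
    have hM0 : (1/M) ≠ 0 := (one_div_pos.mpr (by linarith : (0:ℝ) < M)).ne'
    exact not_summable_inv_jap1 ((summable_mul_left_iff hM0).mp hsum4)
  · -- convergent regime
    have hterm : ∀ k : ℤ, gf (param k) ≤ 2 * (1 / jap1 k ^ r) := by
      intro k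
      rw [hgpk k]
      have h1 : jap1 k ^ r ≤ 2 * jap (param k) ^ r := by
        calc jap1 k ^ r ≤ (Real.sqrt 2 * jap (param k)) ^ r :=
          Real.rpow_le_rpow (jap1_pos k).le (hlow k) (by linarith)
        _ = (Real.sqrt 2) ^ r * jap (param k) ^ r :=
          Real.mul_rpow (Real.sqrt_nonneg 2) (jap_pos _).le
        _ ≤ 2 * jap (param k) ^ r := by
            have h2 : (Real.sqrt 2) ^ r ≤ (Real.sqrt 2) ^ (2:ℝ) :=
              Real.rpow_le_rpow_of_exponent_le
                (by rw [show (1:ℝ) = Real.sqrt 1 from (Real.sqrt_one).symm];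
                    exact Real.sqrt_le_sqrt (by norm_num)) hr2.le
            have h3 : (Real.sqrt 2) ^ (2:ℝ) = 2 := by
              rw [show (2:ℝ) = ((2:ℕ):ℝ) by norm_num, Real.rpow_natCast]
              exact Real.sq_sqrt (by norm_num)
            nlinarith [jap_rpow_pos (param k) r]
      rw [mul_one_div, div_le_div_iff₀ (jap_rpow_pos (param k) r) (jap1_rpow_pos k r)]
      nlinarith [h1, jap_rpow_pos (param k) r, jap1_rpow_pos k r]
    have hmaj : Summable (fun k : ℤ => 2 * (1 / jap1 k ^ r)) :=
      (summable_jap1 r hr1).mul_left 2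
    have hsum2 : Summable (fun k : ℤ => gf (param k)) := hsum.comp_injective hinj
    calc ∑' m, gf m = ∑' k : ℤ, gf (param k) := htsum_eq
    _ ≤ ∑' k : ℤ, 2 * (1 / jap1 k ^ r) := Summable.tsum_le_tsum hterm hsum2 hmaj
    _ = K := by rw [hK, tsum_mul_left]


lemma expand_constraint (p z m : ℤ × ℤ) :
    zsq (p - z) + zsq (z - m) - zsq m = zsq (p - z) + zsq z - 2 * dotz z m := by
  unfold zsq dotz
  simp only [Prod.fst_sub, Prod.snd_sub]
  ring

end StmtAux

open StmtAux in
open scoped Classical in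
theorem stmt9 (ε : ℝ) (hε : 0 < ε) :
    ∃ C : ℝ, ∀ (p : ℤ × ℤ) (τ : ℝ),
      (∑' z : ℤ × ℤ, ∑' m : ℤ × ℤ,
        if ((zsq (p - z) + zsq (z - m) - zsq m : ℤ) : ℝ) + τ = 0 ∧ z ≠ p then
          1 / (jap (p - z) ^ (2 + ε) * jap m ^ (2 - ε))
        else 0) ≤ C := by
  obtain ⟨K, hK0, hKb⟩ := L1 (2 - ε) (by linarith)
  have hs : (2:ℝ) < 2 + ε := by linarith
  have hS0 := summable_jap (2 + ε) hs
  refine ⟨K * ∑' u : ℤ × ℤ, 1 / jap u ^ (2 + ε), fun p τ => ?_⟩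
  set F : (ℤ × ℤ) → (ℤ × ℤ) → ℝ := fun z m =>
    if ((zsq (p - z) + zsq (z - m) - zsq m : ℤ) : ℝ) + τ = 0 ∧ z ≠ p then
      1 / (jap (p - z) ^ (2 + ε) * jap m ^ (2 - ε))
    else 0 with hF
  have hFnn : ∀ z m, 0 ≤ F z m := by
    intro z m
    rw [hF]
    dsimp only
    split_ifs
    · exact div_nonneg zero_le_one
        (mul_nonneg (jap_rpow_pos _ (2+ε)).le (jap_rpow_pos m (2-ε)).le)
    · exact le_refl 0
  have hGnn : ∀ z, 0 ≤ ∑' m, F z m := fun z => tsum_nonneg (hFnn z)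
  have hGle : ∀ z, (∑' m, F z m) ≤ K * (1 / jap (p - z) ^ (2 + ε)) := by
    intro z
    by_cases hzp : z = p
    · have h0 : ∀ m, F z m = 0 := by
        intro m
        rw [hF]
        exact if_neg (fun h => h.2 hzp)
      rw [tsum_congr h0, tsum_zero]
      exact mul_nonneg hK0 (div_nonneg zero_le_one (jap_rpow_pos _ _).le)
    · set c : ℝ := ((zsq (p - z) + zsq z : ℤ) : ℝ) + τ with hc
      have hcond : ∀ m : ℤ × ℤ,
          (((zsq (p - z) + zsq (z - m) - zsq m : ℤ) : ℝ) + τ = 0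
            ↔ ((2 * dotz z m : ℤ) : ℝ) = c) := by
        intro m
        rw [expand_constraint p z m, hc]
        push_cast
        constructor <;> intro h <;> linarith
      have hFm : ∀ m, F z m = (1 / jap (p - z) ^ (2 + ε)) *
          (if ((2 * dotz z m : ℤ) : ℝ) = c then 1 / jap m ^ (2 - ε) else 0) := by
        intro m
        rw [hF]
        dsimp only
        by_cases hC : ((2 * dotz z m : ℤ) : ℝ) = c
        · rw [if_pos ⟨(hcond m).mpr hC, hzp⟩, if_pos hC, one_div_mul_one_div]
        · rw [if_neg (fun h => hC ((hcond m).mp h.1)), if_neg hC, mul_zero]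
      calc (∑' m, F z m)
          = (1 / jap (p - z) ^ (2 + ε)) *
            ∑' m, (if ((2 * dotz z m : ℤ) : ℝ) = c then 1 / jap m ^ (2 - ε) else 0) := by
            rw [tsum_congr hFm, tsum_mul_left]
      _ ≤ (1 / jap (p - z) ^ (2 + ε)) * K :=
            mul_le_mul_of_nonneg_left (hKb z c)
              (div_nonneg zero_le_one (jap_rpow_pos _ _).le)
      _ = K * (1 / jap (p - z) ^ (2 + ε)) := mul_comm _ _
  have hmaj : Summable (fun z : ℤ × ℤ => K * (1 / jap (p - z) ^ (2 + ε))) := by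
    have h1 : Summable (fun z : ℤ × ℤ => 1 / jap (p - z) ^ (2 + ε)) := by
      have := (Equiv.subLeft p).summable_iff
        (f := fun u : ℤ × ℤ => 1 / jap u ^ (2 + ε)) |>.mpr hS0
      refine this.congr (fun z => ?_)
      simp [Equiv.subLeft]
    exact h1.mul_left K
  have hGsum : Summable (fun z => ∑' m, F z m) :=
    Summable.of_nonneg_of_le hGnn hGle hmaj
  calc (∑' z, ∑' m, F z m)
      ≤ ∑' z : ℤ × ℤ, K * (1 / jap (p - z) ^ (2 + ε)) := Summable.tsum_le_tsum hGle hGsum hmaj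
  _ = K * ∑' z : ℤ × ℤ, (1 / jap (p - z) ^ (2 + ε)) := tsum_mul_left
  _ = K * ∑' u : ℤ × ℤ, 1 / jap u ^ (2 + ε) := by
      congr 1
      have := Equiv.tsum_eq (Equiv.subLeft p) (fun u : ℤ × ℤ => 1 / jap u ^ (2 + ε))
      rw [← this]
      refine tsum_congr (fun z => ?_)
      simp [Equiv.subLeft]
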